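/- Let τ ≥ ω₁ be a regular initial ordinal and let σ, λ be initial ordinals with ω ≤ λ < σ ≤ τ. Then there is no continuous injective map f : c₀(Γ_σ) → M_{τλ} such that f(0) = 0 and f(x) ∈ M_{τλ} \ C_p([0, τ·λ]) for every x ≠ 0. Equivalently: every injective map f : c₀(Γ_σ) → M_{τλ} with f(0) = 0 and f(x) discontinuous (as a function on [0,τ·λ]) for all x ≠ 0 fails to be continuous. -/

import Mathlib

open Filter Topology Set Cardinal Order


/-- A regular (initial) ordinal: an ordinal equal to its own cofinality. -/
def IsRegularOrdinal (o : Ordinal) : Prop := o.cof.ord = o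

/-- `M_{τλ}`: the set of functions `x : [0, τ·λ] → ℝ` that are continuous at every
point `t` with `cf(t) < τ`; as a subtype it carries the subspace topology of the
product topology on `ℝ^[0,τ·λ]`. -/
def MSet (τ lam : Ordinal) : Set (Set.Iic (τ * lam) → ℝ) :=
  {x | ∀ t : Set.Iic (τ * lam), ((t : Ordinal).cof.ord < τ) → ContinuousAt x t}

/-- `c₀(Γ_σ)`: the functions on the discrete set `Γ_σ` of ordinals `< σ` such that
`{t : |x t| ≥ ε}` is finite for every `ε > 0`; as a subtype it carries the topology
of pointwise convergence inherited from `ℝ^{Γ_σ}`. -/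
def c0Set (σ : Ordinal) : Set (Set.Iio σ → ℝ) :=
  {x | ∀ ε : ℝ, 0 < ε → {t : Set.Iio σ | ε ≤ |x t|}.Finite}

/-- Let `τ ≥ ω₁` be a regular initial ordinal and `σ`, `λ` initial ordinals with
`ω ≤ λ < σ ≤ τ`. Then there is no continuous injective `f : c₀(Γ_σ) → M_{τλ}` with
`f 0 = 0` and `f x ∈ M_{τλ} \ C_p([0, τ·λ])` (i.e. `f x` discontinuous) for `x ≠ 0`. -/
theorem stmt9 (τ σ lam : Ordinal) (hreg : IsRegularOrdinal τ) (hτinit : τ.IsInitial)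
    (hτ : (Cardinal.aleph 1).ord ≤ τ) (hσ : σ.IsInitial) (hlam : lam.IsInitial)
    (h1 : Ordinal.omega0 ≤ lam) (h2 : lam < σ) (h3 : σ ≤ τ) :
    ¬ ∃ f : ↥(c0Set σ) → (Set.Iic (τ * lam) → ℝ),
      Continuous f ∧ Function.Injective f ∧ (∀ x, f x ∈ MSet τ lam) ∧
      (∀ x : ↥(c0Set σ), (x : Set.Iio σ → ℝ) = 0 → f x = 0) ∧
      (∀ x : ↥(c0Set σ), (x : Set.Iio σ → ℝ) ≠ 0 → ¬ Continuous (f x)) := by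
  rintro ⟨f, hfc, -, hfM, hf0, hfd⟩
  have hτω : Ordinal.omega0 < τ := by
    have h01 : (ℵ₀ : Cardinal).ord < (Cardinal.aleph 1).ord :=
      Cardinal.ord_lt_ord.2 (by simpa using Cardinal.aleph0_lt_aleph_one)
    rw [Cardinal.ord_aleph0] at h01
    exact h01.trans_le hτ
  have hτ0 : (0:Ordinal) < τ := Ordinal.omega0_pos.trans hτω
  -- basis functions
  have hEc : ∀ α : Set.Iio σ, (fun t : Set.Iio σ => if t = α then (1:ℝ) else 0) ∈ c0Set σ := by
    intro α ε hε
    apply Set.Finite.subset (Set.finite_singleton α)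
    intro t ht
    simp only [Set.mem_setOf_eq] at ht
    by_contra hne
    rw [if_neg (by simpa using hne)] at ht
    simp at ht; linarith
  set E : Set.Iio σ → ↥(c0Set σ) := fun α => ⟨_, hEc α⟩ with hE
  have hz : (0 : Set.Iio σ → ℝ) ∈ c0Set σ := by
    intro ε hε
    convert Set.finite_empty
    ext t; simp [hε.not_ge]
  have hfz : f ⟨0, hz⟩ = 0 := hf0 ⟨0, hz⟩ rfl
  -- key extraction
  have key : ∀ α : Set.Iio σ, ∃ (t : Set.Iic (τ*lam)) (n : ℕ),
      (t:Ordinal) % τ = 0 ∧ τ ≤ (t:Ordinal).cof.ord ∧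
      ∃ᶠ r in nhds t, 1/((n:ℝ)+1) ≤ dist (f (E α) r) (f (E α) t) := by
    intro α
    have hne : (E α : Set.Iio σ → ℝ) ≠ 0 := by
      intro h
      have := congrFun h α
      simp [hE] at this
    have hdis := hfd (E α) hne
    rw [continuous_iff_continuousAt] at hdis
    push_neg at hdis
    obtain ⟨t, ht⟩ := hdis
    have hcof : τ ≤ (t:Ordinal).cof.ord := by
      by_contra hlt
      exact ht (hfM (E α) t (not_le.1 hlt))
    have hmod : (t:Ordinal) % τ = 0 := by
      by_contra hm
      have hmlt : (t:Ordinal) % τ < τ := Ordinal.mod_lt _ hτ0.ne'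
      have hcc : (t:Ordinal).cof = ((t:Ordinal) % τ).cof := by
        conv_lhs => rw [← Ordinal.div_add_mod (t:Ordinal) τ]
        exact Ordinal.cof_add _ hm
      have hle : ((t:Ordinal) % τ).cof.ord ≤ (t:Ordinal) % τ := Ordinal.ord_cof_le _
      rw [hcc] at hcof
      exact absurd (hcof.trans hle) (not_le.2 hmlt)
    have ht2 : ¬ Filter.Tendsto (f (E α)) (nhds t) (nhds (f (E α) t)) := ht
    rw [Metric.tendsto_nhds] at ht2
    push_neg at ht2
    obtain ⟨ε, hε, hfreq⟩ := ht2
    obtain ⟨n, hn⟩ := exists_nat_one_div_lt hε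
    refine ⟨t, n, hmod, hcof, ?_⟩
    refine hfreq.mono fun r hr => ?_
    exact le_trans (le_of_lt hn) hr
  choose T N hmod hcof hfreq using key
  -- pigeonhole
  set Φ : Set.Iio σ → ↥(Set.Iic lam) × ℕ := fun α =>
    (⟨(T α : Ordinal) / τ, Ordinal.div_le_of_le_mul (T α).2⟩, N α) with hΦ
  have hlamc : ℵ₀ ≤ lam.card := by
    have := Ordinal.card_le_card h1
    rwa [Ordinal.card_omega0] at this
  have hcard : #(↥(Set.Iic lam) × ℕ) < #(↥(Set.Iio σ)) := by
    have hIic : #(↥(Set.Iic lam)) = Cardinal.lift.{u_1+1, u_1} (succ lam).card := by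
      rw [← Order.Iio_succ lam]
      exact Ordinal.mk_Iio_ordinal _
    have hsc : (succ lam).card = lam.card := by
      rw [Ordinal.card_succ]
      exact Cardinal.add_one_eq hlamc
    have hIic' : #(↥(Set.Iic lam)) = Cardinal.lift.{u_1+1, u_1} lam.card := by rw [hIic, hsc]
    have hinf : ℵ₀ ≤ #(↥(Set.Iic lam)) := by
      rw [hIic']
      exact Cardinal.aleph0_le_lift.2 hlamc
    have hprod : #(↥(Set.Iic lam) × ℕ) = #(↥(Set.Iic lam)) := by
      rw [Cardinal.mk_prod, Cardinal.lift_uzero, Cardinal.mk_nat, Cardinal.lift_aleph0,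
        Cardinal.mul_eq_max hinf le_rfl]
      exact max_eq_left hinf
    rw [hprod, hIic', Ordinal.mk_Iio_ordinal]
    exact Cardinal.lift_lt.2 (hσ.card_lt_card.2 h2)
  haveI : Nonempty (↥(Set.Iic lam)) := ⟨⟨0, (zero_le : (0:Ordinal) ≤ lam)⟩⟩
  obtain ⟨⟨q₀, n₀⟩, hfib⟩ := Cardinal.exists_infinite_fiber' Φ hcard
  haveI := hfib
  set δ : ℝ := 1/((n₀:ℝ)+1) with hδ
  have hδ0 : 0 < δ := by positivity
  set t₀ : Ordinal := τ * (q₀ : Ordinal) with ht₀d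
  have ht₀T : t₀ ≤ τ * lam := mul_le_mul_right q₀.2 τ
  set T0 : ↥(Set.Iic (τ*lam)) := ⟨t₀, ht₀T⟩ with hT0
  set w : ℕ ↪ ↥(Φ ⁻¹' {(q₀, n₀)}) := Infinite.natEmbedding _ with hw
  set αs : ℕ → Set.Iio σ := fun k => (w k : Set.Iio σ) with hαs
  have hαinj : Function.Injective αs := fun a b h => w.injective (Subtype.ext h)
  have hfibk : ∀ k, Φ (αs k) = (q₀, n₀) := fun k => (w k).2
  have hTk : ∀ k, T (αs k) = T0 := by
    intro k
    have h := hfibk k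
    rw [Prod.ext_iff] at h
    have h1' : (T (αs k) : Ordinal) / τ = (q₀ : Ordinal) := congrArg Subtype.val h.1
    apply Subtype.ext
    have h2' := Ordinal.div_add_mod (T (αs k) : Ordinal) τ
    rw [hmod (αs k), add_zero] at h2'
    show (T (αs k) : Ordinal) = t₀
    rw [← h2', h1']
  have hNk : ∀ k, N (αs k) = n₀ := by
    intro k
    have h := hfibk k
    rw [Prod.ext_iff] at h
    exact h.2
  have ht₀cof : τ ≤ t₀.cof.ord := by
    have h := hcof (αs 0)
    rwa [hTk 0] at h
  have ht₀pos : 0 < t₀ := by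
    rcases eq_zero_or_pos t₀ with h | h
    · rw [h] at ht₀cof
      simp [Ordinal.cof_zero] at ht₀cof
      exact absurd ht₀cof hτ0.ne'
    · exact h
  have ht₀cof' : ℵ₀ < t₀.cof := by
    have ha : Cardinal.aleph 1 ≤ t₀.cof := Cardinal.ord_le_ord.1 (hτ.trans ht₀cof)
    exact lt_of_lt_of_le (by simpa using Cardinal.aleph0_lt_aleph_one) ha
  -- convergence
  have hAz : Filter.Tendsto (fun k => E (αs k)) Filter.atTop (nhds ⟨0, hz⟩) := by
    rw [tendsto_subtype_rng, tendsto_pi_nhds]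
    intro γ
    show Filter.Tendsto (fun k => if γ = αs k then (1:ℝ) else 0) Filter.atTop
      (nhds ((0 : Set.Iio σ → ℝ) γ))
    rw [Pi.zero_apply]
    apply Filter.Tendsto.congr' _ tendsto_const_nhds
    by_cases hex : ∃ k0, αs k0 = γ
    · obtain ⟨k0, hk0⟩ := hex
      filter_upwards [Filter.eventually_gt_atTop k0] with k hk
      show (0:ℝ) = if γ = αs k then (1:ℝ) else 0
      rw [if_neg]
      intro hEq
      exact absurd (hαinj (hk0.trans hEq)) hk.ne
    · apply Filter.Eventually.of_forall
      intro k
      show (0:ℝ) = if γ = αs k then (1:ℝ) else 0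
      rw [if_neg (fun hEq => hex ⟨k, hEq.symm⟩)]
  have hconv : Filter.Tendsto (fun k => f (E (αs k))) Filter.atTop (nhds 0) := by
    have h := (hfc.tendsto ⟨0, hz⟩).comp hAz
    rwa [hfz] at h
  have hconvT0 := tendsto_pi_nhds.1 hconv T0
  have hsmall : ∀ᶠ k in Filter.atTop, |f (E (αs k)) T0| < δ/2 := by
    have h := Metric.tendsto_nhds.1 hconvT0 (δ/2) (by positivity)
    refine h.mono fun k hk => ?_
    rwa [Pi.zero_apply, Real.dist_eq, sub_zero] at hk
  obtain ⟨K, hK⟩ := Filter.eventually_atTop.1 hsmall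
  set B : ℕ → ↥(c0Set σ) := fun k => E (αs (k + K)) with hB
  have hBsmall : ∀ k, |f (B k) T0| < δ/2 := fun k => hK _ (Nat.le_add_left K k)
  have hBfreq : ∀ k, ∃ᶠ r in nhds T0, δ ≤ dist (f (B k) r) (f (B k) T0) := by
    intro k
    have h := hfreq (αs (k+K))
    rw [hTk, hNk] at h
    exact h
  -- cofinal witnesses
  have hG : ∀ (k : ℕ) (s : Ordinal), s < t₀ →
      ∃ r, s < r ∧ r < t₀ ∧ ∃ hr : r ≤ τ * lam, δ/2 ≤ |f (B k) ⟨r, hr⟩| := by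
    intro k s hs
    have hV : ∀ᶠ x : ↥(Set.Iic (τ*lam)) in nhds T0, (x:Ordinal) ∈ Set.Ioo s (t₀+1) := by
      have hopen : IsOpen ((fun x : ↥(Set.Iic (τ*lam)) => (x:Ordinal)) ⁻¹' Set.Ioo s (t₀+1)) :=
        isOpen_Ioo.preimage continuous_subtype_val
      exact hopen.mem_nhds ⟨hs, by rw [Ordinal.add_one_eq_succ]; exact Order.lt_succ t₀⟩
    obtain ⟨r, hrd, hr1, hr2⟩ := ((hBfreq k).and_eventually hV).exists
    have hrne : r ≠ T0 := by
      intro h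
      rw [h] at hrd
      simp only [dist_self] at hrd
      linarith
    have hrlt : (r:Ordinal) < t₀ := by
      rw [Ordinal.add_one_eq_succ, Order.lt_succ_iff] at hr2
      exact hr2.lt_of_ne (fun h => hrne (Subtype.ext h))
    refine ⟨r, hr1, hrlt, r.2, ?_⟩
    have hd : dist (f (B k) r) (f (B k) T0) ≤ |f (B k) r| + |f (B k) T0| := by
      rw [Real.dist_eq]
      exact abs_sub _ _
    have hsm := hBsmall k
    have heta : (⟨(r:Ordinal), r.2⟩ : ↥(Set.Iic (τ*lam))) = r := rfl
    rw [heta]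
    linarith
  -- recursive sequence
  obtain ⟨ρ, hρs⟩ : ∃ ρ : ℕ → {o : Ordinal // o < t₀},
      ∀ j, (ρ j).1 < (ρ (j+1)).1 ∧ ∃ hr : (ρ (j+1)).1 ≤ τ*lam,
        δ/2 ≤ |f (B (Nat.unpair j).2) ⟨(ρ (j+1)).1, hr⟩| := by
    choose F hF1 hF2 hF3 using fun (k : ℕ) (p : {o : Ordinal // o < t₀}) => hG k p.1 p.2
    refine ⟨fun j => Nat.rec ⟨0, ht₀pos⟩ (fun j p => ⟨F (Nat.unpair j).2 p, hF2 _ p⟩) j,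
      fun j => ⟨hF1 _ _, hF3 _ _⟩⟩
  have hmono : StrictMono fun j => (ρ j).1 := strictMono_nat_of_lt_succ fun j => (hρs j).1
  set R : Ordinal := ⨆ j, (ρ j).1 with hRd
  have hRlt : R < t₀ := by
    apply Ordinal.iSup_lt_ord_lift
    · rw [Cardinal.mk_nat, Cardinal.lift_aleph0]
      exact ht₀cof'
    · exact fun j => (ρ j).2
  have hρR : ∀ j, (ρ j).1 < R :=
    fun j => lt_of_lt_of_le ((hρs j).1) (le_ciSup (Ordinal.bddAbove_range _) (j+1))
  have hcofR : R.cof ≤ ℵ₀ := by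
    have h := Ordinal.cof_iSup_le_lift hρR
    rwa [Cardinal.mk_nat, Cardinal.lift_aleph0] at h
  have hRT : R ≤ τ * lam := hRlt.le.trans ht₀T
  have hRcont : ∀ k, ContinuousAt (f (B k)) ⟨R, hRT⟩ := by
    intro k
    apply hfM (B k) ⟨R, hRT⟩
    calc (R : Ordinal).cof.ord ≤ (ℵ₀ : Cardinal).ord := Cardinal.ord_le_ord.2 hcofR
      _ = Ordinal.omega0 := Cardinal.ord_aleph0
      _ < τ := hτω
  have hkey : ∀ k, δ/2 ≤ |f (B k) ⟨R, hRT⟩| := by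
    intro k
    have hclos : (⟨R, hRT⟩ : ↥(Set.Iic (τ*lam))) ∈
        closure {x : ↥(Set.Iic (τ*lam)) | δ/2 ≤ |f (B k) x|} := by
      rw [closure_subtype]
      rw [Ordinal.mem_closure_iff_iSup]
      refine ⟨ULift ℕ, inferInstance, fun m => (ρ (Nat.pair m.down k + 1)).1, fun m => ?_, ?_⟩
      · obtain ⟨hr, hb⟩ := (hρs (Nat.pair m.down k)).2
        simp only [Nat.unpair_pair] at hb
        exact ⟨⟨_, hr⟩, hb, rfl⟩
      · show (⨆ m : ULift ℕ, (ρ (Nat.pair m.down k + 1)).1) = R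
        apply le_antisymm
        · exact ciSup_le fun m => le_ciSup (Ordinal.bddAbove_range fun j => (ρ j).1) _
        · refine ciSup_le fun j => ?_
          calc (ρ j).1 ≤ (ρ (Nat.pair j k + 1)).1 :=
                hmono.monotone ((Nat.left_le_pair j k).trans (Nat.le_succ _))
            _ ≤ _ := le_ciSup (Ordinal.bddAbove_range _) (ULift.up j)
    have hC : IsClosed {v : ℝ | δ/2 ≤ |v|} := isClosed_le continuous_const continuous_abs
    haveI hne : (nhdsWithin (⟨R, hRT⟩ : ↥(Set.Iic (τ*lam)))
        {x | δ/2 ≤ |f (B k) x|}).NeBot := mem_closure_iff_nhdsWithin_neBot.1 hclos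
    have htd : Filter.Tendsto (f (B k))
        (nhdsWithin (⟨R, hRT⟩ : ↥(Set.Iic (τ*lam))) {x | δ/2 ≤ |f (B k) x|})
        (nhds (f (B k) ⟨R, hRT⟩)) := (hRcont k).continuousWithinAt
    exact hC.mem_of_tendsto htd (eventually_mem_nhdsWithin.mono fun x hx => hx)
  -- final contradiction
  have hRconv := tendsto_pi_nhds.1 hconv ⟨R, hRT⟩
  have h := Metric.tendsto_nhds.1 hRconv (δ/2) (by positivity)
  obtain ⟨M, hM⟩ := Filter.eventually_atTop.1 h
  have h1' := hM (M + K) (Nat.le_add_right _ _)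
  rw [Pi.zero_apply, Real.dist_eq, sub_zero] at h1'
  have h2' := hkey M
  simp only [hB] at h2'
  exact absurd h2' (not_le.2 h1')
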